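/- arXiv:2503.01889 — 8 statements merged into one kernel-verified Lean document; each statement's English description precedes it below -/
import Mathlib

section
/- A complete strategy profile (σ*;π*) of a finite game with uncertainty is an extended equilibrium if and only if it is a fixed point of the auxiliary map Υ, where Υ(σ;π) = (σ';π') with σ'_i(a_i) = (σ_i(a_i) + φ_{i,a_i}(σ;π)) / (1 + Σ_{b_i∈𝒜_i} φ_{i,b_i}(σ;π)), π'_i(θ) = (π_i(θ) + ψ_{i,θ}(σ;π)) / (1 + Σ_{χ∈Θ} ψ_{i,χ}(σ;π)), φ_{i,a_i}(σ;π) = max(0, EU_i(a_i|σ;π) − EU_i(σ;π)), and ψ_{i,θ}(σ;π) = max(0, ER_i(θ|σ;π) − ER_i(σ;π)). -/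
open Finset

noncomputable section

/-- A probability distribution on a finite type. -/
def IsDist {α : Type*} [Fintype α] (p : α → ℝ) : Prop :=
  (∀ x, 0 ≤ p x) ∧ ∑ x, p x = 1

variable {N : ℕ} {A : Fin N → Type*} [∀ j, Fintype (A j)] [∀ j, Nonempty (A j)]
  {Θ : Type*} [Fintype Θ] [Nonempty Θ]

/-- `Π(a|σ) = ∏ⱼ σⱼ(aⱼ)`. -/
def piProb (σ : ∀ j : Fin N, A j → ℝ) (a : ∀ j : Fin N, A j) : ℝ := ∏ j, σ j (a j)

/-- Effective utility matrix `EUᵢ(aᵢ;θ|σ)`. -/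
def EUmat (U : ∀ i : Fin N, (∀ j : Fin N, A j) → Θ → ℝ) (σ : ∀ j : Fin N, A j → ℝ)
    (i : Fin N) (ai : A i) (θ : Θ) : ℝ :=
  ∑ b : ∀ j : Fin N, A j, U i (Function.update b i ai) θ * piProb σ b

/-- Effective regret matrix `ERᵢ(aᵢ;θ|σ)`. -/
def ERmat (U : ∀ i : Fin N, (∀ j : Fin N, A j) → Θ → ℝ) (σ : ∀ j : Fin N, A j → ℝ)
    (i : Fin N) (ai : A i) (θ : Θ) : ℝ :=
  (Finset.univ.sup' Finset.univ_nonempty fun ci : A i => EUmat U σ i ci θ) - EUmat U σ i ai θ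

/-- Expected utility of action `aᵢ`: `EUᵢ(aᵢ|σ;π)`. -/
def EUact (U : ∀ i : Fin N, (∀ j : Fin N, A j) → Θ → ℝ) (σ : ∀ j : Fin N, A j → ℝ) (π : Fin N → Θ → ℝ)
    (i : Fin N) (ai : A i) : ℝ :=
  ∑ θ, EUmat U σ i ai θ * π i θ

/-- Expected utility `EUᵢ(σ;π)`. -/
def EUtot (U : ∀ i : Fin N, (∀ j : Fin N, A j) → Θ → ℝ) (σ : ∀ j : Fin N, A j → ℝ) (π : Fin N → Θ → ℝ)
    (i : Fin N) : ℝ :=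
  ∑ ai, EUact U σ π i ai * σ i ai

/-- Expected regret at parameter `θ`: `ERᵢ(θ|σ;π)`. -/
def ERparam (U : ∀ i : Fin N, (∀ j : Fin N, A j) → Θ → ℝ) (σ : ∀ j : Fin N, A j → ℝ)
    (i : Fin N) (θ : Θ) : ℝ :=
  ∑ ai, ERmat U σ i ai θ * σ i ai

/-- Expected regret `ERᵢ(σ;π)`. -/
def ERtot (U : ∀ i : Fin N, (∀ j : Fin N, A j) → Θ → ℝ) (σ : ∀ j : Fin N, A j → ℝ) (π : Fin N → Θ → ℝ)
    (i : Fin N) : ℝ :=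
  ∑ θ, ERparam U σ i θ * π i θ

/-- Extended equilibrium conditions. -/
def ExtendedEquilibrium (U : ∀ i : Fin N, (∀ j : Fin N, A j) → Θ → ℝ)
    (σ : ∀ j : Fin N, A j → ℝ) (π : Fin N → Θ → ℝ) : Prop :=
  (∀ i, ∀ ai : A i, EUtot U σ π i ≥ EUact U σ π i ai) ∧
  (∀ i, ∀ θ : Θ, ERtot U σ π i ≥ ERparam U σ i θ)

/-- φ_{i,aᵢ}(σ;π). -/
def phi (U : ∀ i : Fin N, (∀ j : Fin N, A j) → Θ → ℝ) (σ : ∀ j : Fin N, A j → ℝ) (π : Fin N → Θ → ℝ)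
    (i : Fin N) (ai : A i) : ℝ :=
  max 0 (EUact U σ π i ai - EUtot U σ π i)

/-- ψ_{i,θ}(σ;π). -/
def psi (U : ∀ i : Fin N, (∀ j : Fin N, A j) → Θ → ℝ) (σ : ∀ j : Fin N, A j → ℝ) (π : Fin N → Θ → ℝ)
    (i : Fin N) (θ : Θ) : ℝ :=
  max 0 (ERparam U σ i θ - ERtot U σ π i)

/-- Real-strategy part of the auxiliary map `Υ`. -/
def nextStrat (U : ∀ i : Fin N, (∀ j : Fin N, A j) → Θ → ℝ) (σ : ∀ j : Fin N, A j → ℝ) (π : Fin N → Θ → ℝ)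
    (i : Fin N) (ai : A i) : ℝ :=
  (σ i ai + phi U σ π i ai) / (1 + ∑ bi, phi U σ π i bi)

/-- Prior part of the auxiliary map `Υ`. -/
def nextPrior (U : ∀ i : Fin N, (∀ j : Fin N, A j) → Θ → ℝ) (σ : ∀ j : Fin N, A j → ℝ) (π : Fin N → Θ → ℝ)
    (i : Fin N) (θ : Θ) : ℝ :=
  (π i θ + psi U σ π i θ) / (1 + ∑ χ, psi U σ π i χ)

/-- The auxiliary map `Υ`. -/
def Upsilon (U : ∀ i : Fin N, (∀ j : Fin N, A j) → Θ → ℝ)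
    (ρ : (∀ i, A i → ℝ) × (Fin N → Θ → ℝ)) : (∀ i, A i → ℝ) × (Fin N → Θ → ℝ) :=
  (fun i => nextStrat U ρ.1 ρ.2 i, fun i => nextPrior U ρ.1 ρ.2 i)

/-- Generic lemma: for a distribution `p` and a function `f` whose `p`-average is `0`,
the normalization map fixes `p` iff `f ≤ 0` everywhere. -/
lemma fixed_iff_nonpos {α : Type*} [Fintype α] (p f : α → ℝ)
    (hp0 : ∀ x, 0 ≤ p x) (hp1 : ∑ x, p x = 1)
    (hsum : ∑ x, f x * p x = 0) :
    (∀ x, f x ≤ 0) ↔ ∀ x, (p x + max 0 (f x)) / (1 + ∑ y, max 0 (f y)) = p x := by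
  set S := ∑ y : α, max 0 (f y) with hS
  have hS0 : 0 ≤ S := Finset.sum_nonneg fun y _ => le_max_left _ _
  have hden : (0 : ℝ) < 1 + S := by linarith
  constructor
  · intro h x
    have hmax : ∀ y, max 0 (f y) = 0 := fun y => max_eq_left (h y)
    have : S = 0 := by simp [hS, hmax]
    rw [hmax x, this]
    simp
  · intro h x
    have hfix : ∀ y, max 0 (f y) = p y * S := by
      intro y
      have := h y
      field_simp at this
      linarith
    by_cases hSz : S = 0
    · have := hfix x
      rw [hSz, mul_zero] at this
      by_contra hfx
      push_neg at hfx
      have : max 0 (f x) = f x := max_eq_right (le_of_lt hfx)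
      linarith [hfix x, mul_nonneg (hp0 x) hS0]
    · exfalso
      have hSpos : 0 < S := lt_of_le_of_ne hS0 (Ne.symm hSz)
      -- there exists y with p y > 0 and f y ≤ 0
      by_cases hall : ∀ y, 0 < p y → 0 < f y
      · -- then the average would be positive
        have hpos : 0 < ∑ y : α, f y * p y := by
          have hne : ∃ y, 0 < p y := by
            by_contra hc
            push_neg at hc
            have : ∑ y : α, p y = 0 := Finset.sum_eq_zero fun y _ =>
              le_antisymm (hc y) (hp0 y)
            rw [hp1] at this; norm_num at this
          obtain ⟨y, hy⟩ := hne
          have : ∀ z ∈ Finset.univ, 0 ≤ f z * p z := by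
            intro z _
            by_cases hz : 0 < p z
            · exact le_of_lt (mul_pos (hall z hz) hz)
            · have : p z = 0 := le_antisymm (not_lt.mp hz) (hp0 z)
              simp [this]
          exact Finset.sum_pos' this ⟨y, Finset.mem_univ y,
            mul_pos (hall y hy) hy⟩
        linarith [hsum]
      · push_neg at hall
        obtain ⟨y, hpy, hfy⟩ := hall
        have h1 : max 0 (f y) = 0 := max_eq_left hfy
        have h2 := hfix y
        nlinarith

/-- a complete strategy profile is an extended equilibrium iff it is a
fixed point of the auxiliary map `Υ`. -/
theorem extendedEquilibrium_iff_fixedPoint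
    (U : ∀ i : Fin N, (∀ j : Fin N, A j) → Θ → ℝ)
    (σ : ∀ j : Fin N, A j → ℝ) (π : Fin N → Θ → ℝ)
    (hσ : ∀ i, IsDist (σ i)) (hπ : ∀ i, IsDist (π i)) :
    ExtendedEquilibrium U σ π ↔ Upsilon U (σ, π) = (σ, π) := by
  have hEU : ∀ i, ∑ ai, (EUact U σ π i ai - EUtot U σ π i) * σ i ai = 0 := by
    intro i
    have := (hσ i).2
    simp only [sub_mul, Finset.sum_sub_distrib, ← Finset.mul_sum]
    rw [this, mul_one]
    simp [EUtot]
  have hER : ∀ i, ∑ θ, (ERparam U σ i θ - ERtot U σ π i) * π i θ = 0 := by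
    intro i
    have := (hπ i).2
    simp only [sub_mul, Finset.sum_sub_distrib, ← Finset.mul_sum]
    rw [this, mul_one]
    simp [ERtot]
  have key1 : ∀ i, (∀ ai, EUact U σ π i ai - EUtot U σ π i ≤ 0) ↔
      ∀ ai, nextStrat U σ π i ai = σ i ai := fun i =>
    fixed_iff_nonpos (σ i) _ (hσ i).1 (hσ i).2 (hEU i)
  have key2 : ∀ i, (∀ θ, ERparam U σ i θ - ERtot U σ π i ≤ 0) ↔
      ∀ θ, nextPrior U σ π i θ = π i θ := fun i =>
    fixed_iff_nonpos (π i) _ (hπ i).1 (hπ i).2 (hER i)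
  constructor
  · rintro ⟨h1, h2⟩
    have hs : ∀ i ai, nextStrat U σ π i ai = σ i ai := fun i =>
      (key1 i).mp fun ai => by linarith [h1 i ai]
    have hp : ∀ i θ, nextPrior U σ π i θ = π i θ := fun i =>
      (key2 i).mp fun θ => by linarith [h2 i θ]
    simp only [Upsilon, Prod.mk.injEq]
    exact ⟨funext fun i => funext fun ai => hs i ai,
           funext fun i => funext fun θ => hp i θ⟩
  · intro h
    simp only [Upsilon, Prod.mk.injEq] at h
    obtain ⟨h1, h2⟩ := h
    constructor
    · intro i ai
      have := (key1 i).mpr (fun ai => congrFun (congrFun h1 i) ai) ai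
      linarith
    · intro i θ
      have := (key2 i).mpr (fun θ => congrFun (congrFun h2 i) θ) θ
      linarith
end
end

section
/- If a complete strategy profile (σ*;π*) of a finite game with uncertainty is a fixed point of the auxiliary map Υ, then it is an extended equilibrium: for every player i and action a_i, EU_i(a_i|σ*;π*) − EU_i(σ*;π*) ≤ 0, and for every player i and parameter value θ, ER_i(θ|σ*;π*) − ER_i(σ*;π*) ≤ 0. -/
open Finset

noncomputable section

variable {N : ℕ} {A : Fin N → Type*} [∀ j, Fintype (A j)] [∀ j, Nonempty (A j)]
  {Θ : Type*} [Fintype Θ] [Nonempty Θ]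

/-- Key abstract lemma: if the excess-gain redistribution fixes `p`, then no gain. -/
lemma key_lemma {α : Type*} [Fintype α] (p f : α → ℝ)
    (hp0 : ∀ x, 0 ≤ p x) (hp1 : ∑ x, p x = 1)
    (hfix : ∀ a, max 0 (f a - ∑ b, f b * p b) =
      p a * ∑ b, max 0 (f b - ∑ c, f c * p c)) :
    ∀ a, f a - ∑ b, f b * p b ≤ 0 := by
  set t := ∑ b, f b * p b with ht
  set g := fun a => max 0 (f a - t) with hgdef
  have hg : ∀ a, 0 ≤ g a := fun a => le_max_left _ _
  set S := ∑ b, g b with hS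
  have hS0 : 0 ≤ S := Finset.sum_nonneg fun b _ => hg b
  rcases eq_or_lt_of_le hS0 with h0 | hpos
  · intro a
    have hga : g a = 0 :=
      (Finset.sum_eq_zero_iff_of_nonneg (fun b _ => hg b)).mp h0.symm a (Finset.mem_univ a)
    have := le_max_right 0 (f a - t)
    simpa [hgdef] using this.trans hga.le
  · exfalso
    have hpos' : ∀ a, 0 < p a → 0 < f a - t := by
      intro a hpa
      have hga : 0 < g a := by
        rw [hgdef]; simp only []; rw [hfix a]; exact mul_pos hpa hpos
      rcases lt_max_iff.mp hga with h | h
      · exact absurd h (lt_irrefl 0)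
      · exact h
    have hterm : ∀ a, 0 ≤ (f a - t) * p a := by
      intro a
      rcases eq_or_lt_of_le (hp0 a) with hpa | hpa
      · rw [← hpa, mul_zero]
      · exact le_of_lt (mul_pos (hpos' a hpa) hpa)
    have hsum : ∑ a, (f a - t) * p a = 0 := by
      have : ∑ a, (f a - t) * p a = (∑ a, f a * p a) - t * ∑ a, p a := by
        rw [Finset.mul_sum, ← Finset.sum_sub_distrib]
        exact Finset.sum_congr rfl fun a _ => by ring
      rw [this, hp1, ← ht]; ring
    obtain ⟨a, ha⟩ : ∃ a, 0 < p a := by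
      by_contra h
      push_neg at h
      have : ∑ x, p x = 0 := Finset.sum_eq_zero fun x _ => le_antisymm (h x) (hp0 x)
      rw [hp1] at this; norm_num at this
    have h1 : (f a - t) * p a = 0 :=
      (Finset.sum_eq_zero_iff_of_nonneg (fun b _ => hterm b)).mp hsum a (Finset.mem_univ a)
    have h2 : 0 < (f a - t) * p a := mul_pos (hpos' a ha) ha
    linarith

/-- a fixed point of the auxiliary map `Υ` is an extended equilibrium. -/
theorem fixedPoint_extendedEquilibrium
    (U : ∀ i : Fin N, (∀ j : Fin N, A j) → Θ → ℝ)
    (σ : ∀ j : Fin N, A j → ℝ) (π : Fin N → Θ → ℝ)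
    (hσ : ∀ i, IsDist (σ i)) (hπ : ∀ i, IsDist (π i))
    (hfix : Upsilon U (σ, π) = (σ, π)) :
    (∀ i, ∀ ai : A i, EUact U σ π i ai - EUtot U σ π i ≤ 0) ∧
    (∀ i, ∀ θ : Θ, ERparam U σ i θ - ERtot U σ π i ≤ 0) := by
  have h1 : ∀ i (ai : A i), nextStrat U σ π i ai = σ i ai := fun i ai =>
    congrFun (congrFun (congrArg Prod.fst hfix) i) ai
  have h2 : ∀ i (θ : Θ), nextPrior U σ π i θ = π i θ := fun i θ =>
    congrFun (congrFun (congrArg Prod.snd hfix) i) θ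
  constructor
  · intro i
    have hphi : ∀ ai, phi U σ π i ai = σ i ai * ∑ bi, phi U σ π i bi := by
      intro ai
      have hd : 0 < 1 + ∑ bi, phi U σ π i bi := by
        have : 0 ≤ ∑ bi, phi U σ π i bi :=
          Finset.sum_nonneg fun b _ => le_max_left _ _
        linarith
      have := h1 i ai
      rw [nextStrat, div_eq_iff (ne_of_gt hd)] at this
      linarith [this]
    have := key_lemma (σ i) (EUact U σ π i) (hσ i).1 (hσ i).2 (fun a => hphi a)
    exact this
  · intro i
    have hpsi : ∀ θ, psi U σ π i θ = π i θ * ∑ χ, psi U σ π i χ := by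
      intro θ
      have hd : 0 < 1 + ∑ χ, psi U σ π i χ := by
        have : 0 ≤ ∑ χ, psi U σ π i χ :=
          Finset.sum_nonneg fun b _ => le_max_left _ _
        linarith
      have := h2 i θ
      rw [nextPrior, div_eq_iff (ne_of_gt hd)] at this
      linarith [this]
    have := key_lemma (π i) (ERparam U σ i) (hπ i).1 (hπ i).2 (fun θ => hpsi θ)
    exact this
end
end

section
/- No Fictional Faith (vanishing regret part): let (σ*;π*) be an extended equilibrium of a finite game with uncertainty and suppose player i's equilibrium prior is pure, i.e. π*_i(θ) = 1 if θ = η and 0 otherwise, for some η ∈ Θ. Then player i's equilibrium expected regret is zero, ER_i(σ*;π*) = 0, and moreover every supported action of player i is a best response under every parameter value: for all a_i with σ*_i(a_i) > 0 and all θ ∈ Θ, ER_i(a_i;θ|σ*) = 0, i.e. EU_i(a_i;θ|σ*) = max_{c_i∈𝒜_i} EU_i(c_i;θ|σ*). -/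
open Finset

noncomputable section

variable {N : ℕ} {A : Fin N → Type*} [∀ j, Fintype (A j)] [∀ j, Nonempty (A j)]
  {Θ : Type*} [Fintype Θ] [Nonempty Θ]

/-- "No Fictional Faith", vanishing regret part: a pure equilibrium prior
forces zero expected regret, and every supported action is a best response under every
parameter value. -/
theorem no_fictional_faith_regret [DecidableEq Θ]
    (U : ∀ i : Fin N, (∀ j : Fin N, A j) → Θ → ℝ)
    (σ : ∀ j : Fin N, A j → ℝ) (π : Fin N → Θ → ℝ)
    (hσ : ∀ i, IsDist (σ i)) (hπ : ∀ i, IsDist (π i))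
    (heq : ExtendedEquilibrium U σ π) (i : Fin N) (η : Θ)
    (hpure : π i = fun θ => if θ = η then (1 : ℝ) else 0) :
    ERtot U σ π i = 0 ∧
    ∀ ai : A i, 0 < σ i ai → ∀ θ : Θ,
      ERmat U σ i ai θ = 0 ∧
      EUmat U σ i ai θ =
        Finset.univ.sup' Finset.univ_nonempty (fun ci : A i => EUmat U σ i ci θ) := by

  classical
  have hσi := hσ i
  -- With a pure prior, expected utility of an action reduces to utility at η
  have hEUact : ∀ ai : A i, EUact U σ π i ai = EUmat U σ i ai η := by
    intro ai
    simp [EUact, hpure, mul_ite]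
  set M : ℝ := Finset.univ.sup' Finset.univ_nonempty (fun ci : A i => EUmat U σ i ci η) with hM
  have hEUtot : EUtot U σ π i = ∑ ai, EUmat U σ i ai η * σ i ai := by
    simp [EUtot, hEUact]
  -- EUtot ≥ M
  have h1 : M ≤ EUtot U σ π i := by
    apply Finset.sup'_le
    intro ci _
    have := heq.1 i ci
    rw [hEUact] at this
    linarith
  -- EUtot ≤ M
  have h2 : EUtot U σ π i ≤ M := by
    rw [hEUtot]
    calc ∑ ai, EUmat U σ i ai η * σ i ai ≤ ∑ ai, M * σ i ai := by
          apply Finset.sum_le_sum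
          intro ai _
          exact mul_le_mul_of_nonneg_right (Finset.le_sup' (fun ci : A i => EUmat U σ i ci η) (Finset.mem_univ ai)) (hσi.1 ai)
      _ = M := by rw [← Finset.mul_sum, hσi.2, mul_one]
  have hERη : ERparam U σ i η = 0 := by
    have : ERparam U σ i η = M - EUtot U σ π i := by
      rw [hEUtot, ERparam]
      simp only [ERmat, ← hM, sub_mul, Finset.sum_sub_distrib, ← Finset.mul_sum, hσi.2,
        mul_one]
    rw [this]; linarith
  have hERtot : ERtot U σ π i = 0 := by
    have : ERtot U σ π i = ERparam U σ i η := by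
      simp [ERtot, hpure, mul_ite]
    rw [this, hERη]
  refine ⟨hERtot, ?_⟩
  intro ai hai θ
  -- ERparam θ is nonnegative termwise and ≤ ERtot = 0
  have hterm : ∀ bi : A i, (0:ℝ) ≤ ERmat U σ i bi θ * σ i bi := by
    intro bi
    apply mul_nonneg _ (hσi.1 bi)
    have := Finset.le_sup' (fun ci : A i => EUmat U σ i ci θ) (Finset.mem_univ bi)
    simp only [ERmat]
    linarith
  have hθ0 : ERparam U σ i θ = 0 := by
    have hle := heq.2 i θ
    rw [hERtot] at hle
    have hge : (0:ℝ) ≤ ERparam U σ i θ :=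
      Finset.sum_nonneg fun bi _ => hterm bi
    linarith
  have hzero : ERmat U σ i ai θ * σ i ai = 0 := by
    have := (Finset.sum_eq_zero_iff_of_nonneg (fun bi _ => hterm bi)).mp hθ0 ai
      (Finset.mem_univ ai)
    exact this
  have hER0 : ERmat U σ i ai θ = 0 := by
    rcases mul_eq_zero.mp hzero with h | h
    · exact h
    · exact absurd h (ne_of_gt hai)
  refine ⟨hER0, ?_⟩
  have := hER0
  simp only [ERmat, sub_eq_zero] at this
  exact this.symm
end
end

section
/- No Fictional Faith (total degeneracy part): let (σ*;π*) be an extended equilibrium of a finite game with uncertainty and suppose player i's equilibrium prior is pure, i.e. π*_i(θ) = 1 if θ = η and 0 otherwise, for some η ∈ Θ. Then for every probability distribution π'_i on Θ, the complete strategy profile obtained from (σ*;π*) by replacing π*_i with π'_i (leaving all strategies and all other players' priors unchanged) is again an extended equilibrium; in particular a continuum of extended equilibria exists in this case. -/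
open Finset

noncomputable section

variable {N : ℕ} {A : Fin N → Type*} [∀ j, Fintype (A j)] [∀ j, Nonempty (A j)]
  {Θ : Type*} [Fintype Θ] [Nonempty Θ]

/-- "No Fictional Faith", total degeneracy part: if player `i`'s equilibrium
prior is pure, then replacing it by an arbitrary prior again yields an extended
equilibrium. -/
theorem no_fictional_faith_degenerate [DecidableEq Θ]
    (U : ∀ i : Fin N, (∀ j : Fin N, A j) → Θ → ℝ)
    (σ : ∀ j : Fin N, A j → ℝ) (π : Fin N → Θ → ℝ)
    (hσ : ∀ i, IsDist (σ i)) (hπ : ∀ i, IsDist (π i))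
    (heq : ExtendedEquilibrium U σ π) (i : Fin N) (η : Θ)
    (hpure : π i = fun θ => if θ = η then (1 : ℝ) else 0)
    (π' : Θ → ℝ) (hπ' : IsDist π') :
    (∀ j, IsDist (Function.update π i π' j)) ∧
    ExtendedEquilibrium U σ (Function.update π i π') := by
  classical
  obtain ⟨hσnn, hσ1⟩ := hσ i
  set M : Θ → ℝ := fun θ => Finset.univ.sup' Finset.univ_nonempty
    (fun ci : A i => EUmat U σ i ci θ) with hMdef
  have hMle : ∀ θ (ai : A i), EUmat U σ i ai θ ≤ M θ := by
    intro θ ai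
    simp only [hMdef]
    exact Finset.le_sup' (fun ci : A i => EUmat U σ i ci θ) (Finset.mem_univ ai)
  have hER_eq : ∀ θ, ERparam U σ i θ = M θ - ∑ ai, EUmat U σ i ai θ * σ i ai := by
    intro θ
    have hm : ∀ ai : A i, ERmat U σ i ai θ = M θ - EUmat U σ i ai θ := fun ai => rfl
    simp only [ERparam, hm, sub_mul, Finset.sum_sub_distrib, ← Finset.mul_sum, hσ1, mul_one]
  have havg : ∀ θ, ∑ ai, EUmat U σ i ai θ * σ i ai ≤ M θ := by
    intro θ
    calc ∑ ai, EUmat U σ i ai θ * σ i ai ≤ ∑ ai, M θ * σ i ai := by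
          apply Finset.sum_le_sum
          intro ai _
          exact mul_le_mul_of_nonneg_right (hMle θ ai) (hσnn ai)
      _ = M θ := by rw [← Finset.mul_sum, hσ1, mul_one]
  have hEUact_pure : ∀ ai : A i, EUact U σ π i ai = EUmat U σ i ai η := by
    intro ai
    simp [EUact, hpure, mul_ite, mul_one, mul_zero]
  have hEUtot_pure : EUtot U σ π i = ∑ ai, EUmat U σ i ai η * σ i ai := by
    simp only [EUtot, hEUact_pure]
  have hbest : ∑ ai, EUmat U σ i ai η * σ i ai = M η := by
    refine le_antisymm (havg η) ?_
    apply Finset.sup'_le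
    intro ci _
    have := heq.1 i ci
    rw [hEUtot_pure, hEUact_pure] at this
    exact this
  have hERη : ERparam U σ i η = 0 := by rw [hER_eq, hbest, sub_self]
  have hERtot_pure : ERtot U σ π i = ERparam U σ i η := by
    simp [ERtot, hpure, mul_ite, mul_one, mul_zero]
  have hERall : ∀ θ, ERparam U σ i θ = 0 := by
    intro θ
    refine le_antisymm ?_ ?_
    · have := heq.2 i θ
      rw [hERtot_pure, hERη] at this
      exact this
    · rw [hER_eq]
      exact sub_nonneg.mpr (havg θ)
  have hsumM : ∀ θ, ∑ ai, EUmat U σ i ai θ * σ i ai = M θ := by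
    intro θ
    have := hER_eq θ
    rw [hERall θ] at this
    linarith
  constructor
  · intro j
    by_cases hj : j = i
    · subst hj; rw [Function.update_self]; exact hπ'
    · rw [Function.update_of_ne hj]; exact hπ j
  constructor
  · intro j aj
    by_cases hj : j = i
    · subst hj
      have hact : ∀ ai : A j, EUact U σ (Function.update π j π') j ai
          = ∑ θ, EUmat U σ j ai θ * π' θ := by
        intro ai
        simp [EUact, Function.update_self]
      have htot : EUtot U σ (Function.update π j π') j = ∑ θ, M θ * π' θ := by
        simp only [EUtot, hact, Finset.sum_mul]
        rw [Finset.sum_comm]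
        refine Finset.sum_congr rfl fun θ _ => ?_
        rw [← hsumM θ, Finset.sum_mul]
        refine Finset.sum_congr rfl fun ai _ => ?_
        ring
      rw [htot, hact]
      apply Finset.sum_le_sum
      intro θ _
      exact mul_le_mul_of_nonneg_right (hMle θ aj) (hπ'.1 θ)
    · have hupd : Function.update π i π' j = π j := Function.update_of_ne hj _ _
      have h1 : ∀ ai : A j, EUact U σ (Function.update π i π') j ai = EUact U σ π j ai := by
        intro ai; simp [EUact, hupd]
      have h2 : EUtot U σ (Function.update π i π') j = EUtot U σ π j := by
        simp only [EUtot, h1]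
      rw [h2, h1]
      exact heq.1 j aj
  · intro j θ
    by_cases hj : j = i
    · subst hj
      have : ERtot U σ (Function.update π j π') j = 0 := by
        simp [ERtot, hERall]
      rw [this, hERall θ]
    · have hupd : Function.update π i π' j = π j := Function.update_of_ne hj _ _
      have h2 : ERtot U σ (Function.update π i π') j = ERtot U σ π j := by
        simp only [ERtot, hupd]
      rw [h2]
      exact heq.2 j θ
end
end

section
/- No Fictional Faith (expected utility invariance): let (σ*;π*) be a complete strategy profile of a finite game with uncertainty such that for every action a_i with σ*_i(a_i) > 0 and every θ ∈ Θ, EU_i(a_i;θ|σ*) = max_{c_i∈𝒜_i} EU_i(c_i;θ|σ*). Then for every probability distribution π'_i on Θ and every action a_i ∈ 𝒜_i, Σ_θ Σ_{b_i} EU_i(b_i;θ|σ*) σ*_i(b_i) π'_i(θ) ≥ Σ_θ EU_i(a_i;θ|σ*) π'_i(θ); that is, player i's strategy σ*_i remains expected-utility optimal under any subjective prior. -/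
open Finset

noncomputable section

variable {N : ℕ} {A : Fin N → Type*} [∀ j, Fintype (A j)] [∀ j, Nonempty (A j)]
  {Θ : Type*} [Fintype Θ] [Nonempty Θ]

/-- "No Fictional Faith", expected-utility invariance part: if every
supported action of player `i` is a best response under every parameter value, then
`σᵢ` remains expected-utility optimal under any subjective prior. -/
theorem no_fictional_faith_EU_invariance
    (U : ∀ i : Fin N, (∀ j : Fin N, A j) → Θ → ℝ)
    (σ : ∀ j : Fin N, A j → ℝ) (hσ : ∀ j, IsDist (σ j)) (i : Fin N)
    (hbest : ∀ ai : A i, 0 < σ i ai → ∀ θ : Θ,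
      EUmat U σ i ai θ =
        Finset.univ.sup' Finset.univ_nonempty (fun ci : A i => EUmat U σ i ci θ))
    (π' : Θ → ℝ) (hπ' : IsDist π') (ai : A i) :
    (∑ θ, ∑ bi : A i, EUmat U σ i bi θ * σ i bi * π' θ) ≥
      ∑ θ, EUmat U σ i ai θ * π' θ := by
  apply Finset.sum_le_sum
  intro θ _
  have key : ∑ bi : A i, EUmat U σ i bi θ * σ i bi * π' θ =
      (Finset.univ.sup' Finset.univ_nonempty fun ci : A i => EUmat U σ i ci θ) * π' θ := by
    rw [← Finset.sum_mul]
    congr 1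
    have : ∀ bi : A i, EUmat U σ i bi θ * σ i bi =
        (Finset.univ.sup' Finset.univ_nonempty fun ci : A i => EUmat U σ i ci θ) * σ i bi := by
      intro bi
      rcases lt_or_eq_of_le ((hσ i).1 bi) with h | h
      · rw [hbest bi h θ]
      · rw [← h, mul_zero, mul_zero]
    rw [Finset.sum_congr rfl fun bi _ => this bi, ← Finset.mul_sum, (hσ i).2, mul_one]
  rw [key]
  exact mul_le_mul_of_nonneg_right
    (Finset.le_sup' (fun ci : A i => EUmat U σ i ci θ) (Finset.mem_univ ai)) (hπ'.1 θ)
end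
end

section
/- The 'Generals and the weather' game — the 2-player game with uncertainty with action sets 𝒜_1 = 𝒜_2 = {Up, Down}, parameter set Θ = {Calm, Storm}, and utilities given by the matrices U_1(·,·;Calm) = [[1,0],[0,1]], U_1(·,·;Storm) = [[1,0],[1,1]], U_2(·,·;Calm) = [[0,1],[1,0]], U_2(·,·;Storm) = [[0,1],[0,0]] (rows indexed by player 1's action, columns by player 2's action) — has the extended equilibrium σ*_1 = (1−1/√2, 1/√2), σ*_2 = (2−√2, √2−1), π*_1 = (1/√2, 1−1/√2), π*_2 = (√2−1, 2−√2), with equilibrium expected utilities EU*_1 = 2−√2, EU*_2 = 1−1/√2 and equilibrium expected regrets ER*_1 = 3/√2 − 2, ER*_2 = 3 − 2√2. -/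
open Finset

noncomputable section

variable {N : ℕ} {A : Fin N → Type*} [∀ j, Fintype (A j)] [∀ j, Nonempty (A j)]
  {Θ : Type*} [Fintype Θ] [Nonempty Θ]

/-- The utilities of the "Generals and the weather" game. -/
def GWU : ∀ _ : Fin 2, (∀ _ : Fin 2, Fin 2) → Fin 2 → ℝ := fun i a θ =>
  if i = 0 then
    (if θ = 0 then !![(1:ℝ), 0; 0, 1] else !![(1:ℝ), 0; 1, 1]) (a 0) (a 1)
  else
    (if θ = 0 then !![(0:ℝ), 1; 1, 0] else !![(0:ℝ), 1; 0, 0]) (a 0) (a 1)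

/-- The equilibrium mixed strategies `σ*` of the "Generals and the weather" game. -/
def GWσ : ∀ _ : Fin 2, Fin 2 → ℝ :=
  ![![1 - 1 / Real.sqrt 2, 1 / Real.sqrt 2], ![2 - Real.sqrt 2, Real.sqrt 2 - 1]]

/-- The equilibrium subjective priors `π*` of the "Generals and the weather" game. -/
def GWπ : Fin 2 → Fin 2 → ℝ :=
  ![![1 / Real.sqrt 2, 1 - 1 / Real.sqrt 2], ![Real.sqrt 2 - 1, 2 - Real.sqrt 2]]

lemma sum_pi2 (f : (Fin 2 → Fin 2) → ℝ) : ∑ b, f b = f ![0,0] + f ![0,1] + f ![1,0] + f ![1,1] := by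
  rw [← Equiv.sum_comp (finTwoArrowEquiv (Fin 2)).symm f, Fintype.sum_prod_type]
  simp [Fin.sum_univ_two, finTwoArrowEquiv]; ring

lemma sup2 (f : Fin 2 → ℝ) : Finset.univ.sup' Finset.univ_nonempty f = max (f 0) (f 1) := by
  have : (Finset.univ : Finset (Fin 2)) = {0, 1} := by decide
  simp [this]

/-- the "Generals and the weather" game has the stated extended equilibrium
with the stated equilibrium expected utilities and expected regrets. -/
theorem gw_extended_equilibrium :
    (∀ i, IsDist (GWσ i)) ∧ (∀ i, IsDist (GWπ i)) ∧
    ExtendedEquilibrium GWU GWσ GWπ ∧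
    EUtot GWU GWσ GWπ 0 = 2 - Real.sqrt 2 ∧
    EUtot GWU GWσ GWπ 1 = 1 - 1 / Real.sqrt 2 ∧
    ERtot GWU GWσ GWπ 0 = 3 / Real.sqrt 2 - 2 ∧
    ERtot GWU GWσ GWπ 1 = 3 - 2 * Real.sqrt 2 := by

  have hs : Real.sqrt 2 * Real.sqrt 2 = 2 := Real.mul_self_sqrt (by norm_num)
  have h0 : (0:ℝ) < Real.sqrt 2 := Real.sqrt_pos.2 (by norm_num)
  set s := Real.sqrt 2 with hsdef
  have h1 : (1:ℝ) < s := by nlinarith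
  have h2 : s < (3:ℝ)/2 := by nlinarith
  have hne : s ≠ 0 := ne_of_gt h0
  have hdiv : (1:ℝ)/s = s/2 := by
    rw [div_eq_div_iff hne (by norm_num : (2:ℝ) ≠ 0)]; linarith [hs]
  -- component values
  have gσ00 : GWσ 0 0 = 1 - 1/s := rfl
  have gσ01 : GWσ 0 1 = 1/s := rfl
  have gσ10 : GWσ 1 0 = 2 - s := rfl
  have gσ11 : GWσ 1 1 = s - 1 := rfl
  have gπ00 : GWπ 0 0 = 1/s := rfl
  have gπ01 : GWπ 0 1 = 1 - 1/s := rfl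
  have gπ10 : GWπ 1 0 = s - 1 := rfl
  have gπ11 : GWπ 1 1 = 2 - s := rfl
  have upd0 : ∀ (b : Fin 2 → Fin 2) (c : Fin 2), Function.update b 0 c = ![c, b 1] := by
    intro b c; funext j; fin_cases j <;> simp [Function.update]
  have upd1 : ∀ (b : Fin 2 → Fin 2) (c : Fin 2), Function.update b 1 c = ![b 0, c] := by
    intro b c; funext j; fin_cases j <;> simp [Function.update]
  -- EUmat values
  have etac : ∀ i ai θ : Fin 2, ∀ v : ℝ,
      (GWU i (Function.update ![0,0] i ai) θ * (GWσ 0 0 * GWσ 1 0)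
       + GWU i (Function.update ![0,1] i ai) θ * (GWσ 0 0 * GWσ 1 1)
       + GWU i (Function.update ![1,0] i ai) θ * (GWσ 0 1 * GWσ 1 0)
       + GWU i (Function.update ![1,1] i ai) θ * (GWσ 0 1 * GWσ 1 1)) = v
      → EUmat GWU GWσ i ai θ = v := by
    intro i ai θ v h
    rw [EUmat, sum_pi2]
    simp only [piProb, Fin.prod_univ_two] at *
    convert h using 3 <;> norm_num
  have e000 : EUmat GWU GWσ 0 0 0 = 2 - s := by
    apply etac
    simp only [upd0, upd1]
    norm_num [GWU, gσ00, gσ01, gσ10, gσ11, Matrix.cons_val_zero, Matrix.cons_val_one, Matrix.head_cons]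
    clear * - hs hdiv h0 h1; nlinarith [hs, hdiv]
  have e010 : EUmat GWU GWσ 0 1 0 = s - 1 := by
    apply etac
    simp only [upd0, upd1]
    norm_num [GWU, gσ00, gσ01, gσ10, gσ11, Matrix.cons_val_zero, Matrix.cons_val_one, Matrix.head_cons]
    clear * - hs hdiv h0 h1; nlinarith [hs, hdiv]
  have e001 : EUmat GWU GWσ 0 0 1 = 2 - s := by
    apply etac
    simp only [upd0, upd1]
    norm_num [GWU, gσ00, gσ01, gσ10, gσ11, Matrix.cons_val_zero, Matrix.cons_val_one, Matrix.head_cons]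
    clear * - hs hdiv h0 h1; nlinarith [hs, hdiv]
  have e011 : EUmat GWU GWσ 0 1 1 = 1 := by
    apply etac
    simp only [upd0, upd1]
    norm_num [GWU, gσ00, gσ01, gσ10, gσ11, Matrix.cons_val_zero, Matrix.cons_val_one, Matrix.head_cons]
    clear * - hs hdiv h0 h1; nlinarith [hs, hdiv]
  have e100 : EUmat GWU GWσ 1 0 0 = 1/s := by
    apply etac
    simp only [upd0, upd1]
    norm_num [GWU, gσ00, gσ01, gσ10, gσ11, Matrix.cons_val_zero, Matrix.cons_val_one, Matrix.head_cons]
    clear * - hs hdiv h0 h1; nlinarith [hs, hdiv]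
  have e110 : EUmat GWU GWσ 1 1 0 = 1 - 1/s := by
    apply etac
    simp only [upd0, upd1]
    norm_num [GWU, gσ00, gσ01, gσ10, gσ11, Matrix.cons_val_zero, Matrix.cons_val_one, Matrix.head_cons]
    clear * - hs hdiv h0 h1; nlinarith [hs, hdiv]
  have e101 : EUmat GWU GWσ 1 0 1 = 0 := by
    apply etac
    simp only [upd0, upd1]
    norm_num [GWU, gσ00, gσ01, gσ10, gσ11, Matrix.cons_val_zero, Matrix.cons_val_one, Matrix.head_cons]
  have e111 : EUmat GWU GWσ 1 1 1 = 1 - 1/s := by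
    apply etac
    simp only [upd0, upd1]
    norm_num [GWU, gσ00, gσ01, gσ10, gσ11, Matrix.cons_val_zero, Matrix.cons_val_one, Matrix.head_cons]
    clear * - hs hdiv h0 h1; nlinarith [hs, hdiv]
  -- ERmat values
  have r000 : ERmat GWU GWσ 0 0 0 = 0 := by
    rw [ERmat, sup2, e000, e010, max_eq_left (by linarith)]; ring
  have r010 : ERmat GWU GWσ 0 1 0 = 3 - 2*s := by
    rw [ERmat, sup2, e000, e010, max_eq_left (by linarith)]; ring
  have r001 : ERmat GWU GWσ 0 0 1 = s - 1 := by
    rw [ERmat, sup2, e001, e011, max_eq_right (by linarith)]; ring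
  have r011 : ERmat GWU GWσ 0 1 1 = 0 := by
    rw [ERmat, sup2, e001, e011, max_eq_right (by linarith)]; ring
  have r100 : ERmat GWU GWσ 1 0 0 = 0 := by
    rw [ERmat, sup2, e100, e110, max_eq_left (by linarith [hdiv])]; ring
  have r110 : ERmat GWU GWσ 1 1 0 = s - 1 := by
    rw [ERmat, sup2, e100, e110, max_eq_left (by linarith [hdiv])]
    rw [hdiv]; ring
  have r101 : ERmat GWU GWσ 1 0 1 = 1 - 1/s := by
    rw [ERmat, sup2, e101, e111, max_eq_right (by linarith [hdiv])]; ring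
  have r111 : ERmat GWU GWσ 1 1 1 = 0 := by
    rw [ERmat, sup2, e101, e111, max_eq_right (by linarith [hdiv])]; ring
  -- EUact values
  have a00 : EUact GWU GWσ GWπ 0 0 = 2 - s := by
    rw [EUact, Fin.sum_univ_two, e000, e001, gπ00, gπ01]; ring
  have a01 : EUact GWU GWσ GWπ 0 1 = 2 - s := by
    rw [EUact, Fin.sum_univ_two, e010, e011, gπ00, gπ01, hdiv]; clear * - hs hdiv h0 h1; nlinarith [hs, hdiv]
  have a10 : EUact GWU GWσ GWπ 1 0 = 1 - 1/s := by
    rw [EUact, Fin.sum_univ_two, e100, e101, gπ10, gπ11, hdiv]; clear * - hs hdiv h0 h1; nlinarith [hs, hdiv]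
  have a11 : EUact GWU GWσ GWπ 1 1 = 1 - 1/s := by
    rw [EUact, Fin.sum_univ_two, e110, e111, gπ10, gπ11, hdiv]; clear * - hs hdiv h0 h1; nlinarith [hs, hdiv]
  -- EUtot
  have t0 : EUtot GWU GWσ GWπ 0 = 2 - s := by
    rw [EUtot, Fin.sum_univ_two, a00, a01, gσ00, gσ01]; ring
  have t1 : EUtot GWU GWσ GWπ 1 = 1 - 1/s := by
    rw [EUtot, Fin.sum_univ_two, a10, a11, gσ10, gσ11]; ring
  -- ERparam
  have p00 : ERparam GWU GWσ 0 0 = 3/s - 2 := by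
    rw [ERparam, Fin.sum_univ_two, r000, r010, gσ00, gσ01]
    rw [show (3:ℝ)/s = 3 * (1/s) by ring, hdiv]; clear * - hs hdiv h0 h1; nlinarith [hs, hdiv]
  have p01 : ERparam GWU GWσ 0 1 = 3/s - 2 := by
    rw [ERparam, Fin.sum_univ_two, r001, r011, gσ00, gσ01]
    rw [show (3:ℝ)/s = 3 * (1/s) by ring, hdiv]; clear * - hs hdiv h0 h1; nlinarith [hs, hdiv]
  have p10 : ERparam GWU GWσ 1 0 = 3 - 2*s := by
    rw [ERparam, Fin.sum_univ_two, r100, r110, gσ10, gσ11]; clear * - hs hdiv h0 h1; nlinarith [hs, hdiv]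
  have p11 : ERparam GWU GWσ 1 1 = 3 - 2*s := by
    rw [ERparam, Fin.sum_univ_two, r101, r111, gσ10, gσ11, hdiv]; clear * - hs hdiv h0 h1; nlinarith [hs, hdiv]
  -- ERtot
  have q0 : ERtot GWU GWσ GWπ 0 = 3/s - 2 := by
    rw [ERtot, Fin.sum_univ_two, p00, p01, gπ00, gπ01]; ring
  have q1 : ERtot GWU GWσ GWπ 1 = 3 - 2*s := by
    rw [ERtot, Fin.sum_univ_two, p10, p11, gπ10, gπ11]; ring
  have hpos : (0:ℝ) < 1/s := one_div_pos.2 h0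
  have hlt1 : (1:ℝ)/s < 1 := by rw [div_lt_one h0]; exact h1
  refine ⟨?_, ?_, ⟨?_, ?_⟩, t0, t1, q0, q1⟩
  · intro i
    fin_cases i <;> refine ⟨?_, ?_⟩
    · intro x; fin_cases x
      · show (0:ℝ) ≤ 1 - 1/s; linarith
      · show (0:ℝ) ≤ 1/s; linarith
    · rw [Fin.sum_univ_two]; show (1 - 1/s) + 1/s = 1; ring
    · intro x; fin_cases x
      · show (0:ℝ) ≤ 2 - s; linarith
      · show (0:ℝ) ≤ s - 1; linarith
    · rw [Fin.sum_univ_two]; show (2 - s) + (s - 1) = 1; ring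
  · intro i
    fin_cases i <;> refine ⟨?_, ?_⟩
    · intro x; fin_cases x
      · show (0:ℝ) ≤ 1/s; linarith
      · show (0:ℝ) ≤ 1 - 1/s; linarith
    · rw [Fin.sum_univ_two]; show 1/s + (1 - 1/s) = 1; ring
    · intro x; fin_cases x
      · show (0:ℝ) ≤ s - 1; linarith
      · show (0:ℝ) ≤ 2 - s; linarith
    · rw [Fin.sum_univ_two]; show (s - 1) + (2 - s) = 1; ring
  · intro i ai
    fin_cases i <;> fin_cases ai
    · show EUtot GWU GWσ GWπ 0 ≥ EUact GWU GWσ GWπ 0 0; rw [t0, a00]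
    · show EUtot GWU GWσ GWπ 0 ≥ EUact GWU GWσ GWπ 0 1; rw [t0, a01]
    · show EUtot GWU GWσ GWπ 1 ≥ EUact GWU GWσ GWπ 1 0; rw [t1, a10]
    · show EUtot GWU GWσ GWπ 1 ≥ EUact GWU GWσ GWπ 1 1; rw [t1, a11]
  · intro i θ
    fin_cases i <;> fin_cases θ
    · show ERtot GWU GWσ GWπ 0 ≥ ERparam GWU GWσ 0 0; rw [q0, p00]
    · show ERtot GWU GWσ GWπ 0 ≥ ERparam GWU GWσ 0 1; rw [q0, p01]
    · show ERtot GWU GWσ GWπ 1 ≥ ERparam GWU GWσ 1 0; rw [q1, p10]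
    · show ERtot GWU GWσ GWπ 1 ≥ ERparam GWU GWσ 1 1; rw [q1, p11]
end
end

section
/- The extended equilibrium of the 'Generals and the weather' game cannot be reproduced by any common prior in the corresponding Bayesian game: for every P_c ∈ [0,1], the Bayesian equilibrium strategies σ_1(P_c) = (P_c/(1+P_c), 1/(1+P_c)) and σ_2(P_c) = (1/(1+P_c), P_c/(1+P_c)) satisfy the symmetry σ_1(P_c)(Up) = σ_2(P_c)(Down), whereas the extended equilibrium strategies have σ*_1(Up) = 1−1/√2 ≠ √2−1 = σ*_2(Down); hence there is no P_c ∈ [0,1] with P_c/(1+P_c) = 1−1/√2 and P_c/(1+P_c) = √2−1. -/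
noncomputable section

/-- The Bayesian equilibrium strategy of the "Defender" given a common prior `Pc` for
calm weather: probabilities of `Up` and `Down`. -/
def bayesσ1 (Pc : ℝ) : Fin 2 → ℝ := ![Pc / (1 + Pc), 1 / (1 + Pc)]

/-- The Bayesian equilibrium strategy of the "Attacker" given a common prior `Pc` for
calm weather: probabilities of `Up` and `Down`. -/
def bayesσ2 (Pc : ℝ) : Fin 2 → ℝ := ![1 / (1 + Pc), Pc / (1 + Pc)]

lemma gw_key : (1 : ℝ) - 1 / Real.sqrt 2 ≠ Real.sqrt 2 - 1 := by
  have hs : Real.sqrt 2 > 0 := Real.sqrt_pos.mpr (by norm_num)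
  have hsq : Real.sqrt 2 * Real.sqrt 2 = 2 := Real.mul_self_sqrt (by norm_num)
  intro h
  have h2 : (1 - 1 / Real.sqrt 2) * Real.sqrt 2 = (Real.sqrt 2 - 1) * Real.sqrt 2 := by
    rw [h]
  rw [sub_mul, sub_mul, one_div, inv_mul_cancel₀ hs.ne', hsq] at h2
  -- h2 : √2 - 1 = 2 - √2, so √2 = 3/2
  have h3 : Real.sqrt 2 = 3 / 2 := by linarith
  rw [h3] at hsq
  norm_num at hsq

/-- no common prior reproduces the extended equilibrium of the "Generals
and the weather" game: the Bayesian equilibria satisfy `σ₁(Pc)(Up) = σ₂(Pc)(Down)`,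
while the extended equilibrium has `σ*₁(Up) = 1 − 1/√2 ≠ √2 − 1 = σ*₂(Down)`; hence no
`Pc ∈ [0,1]` matches both. -/
theorem gw_no_common_prior :
    (∀ Pc ∈ Set.Icc (0 : ℝ) 1, bayesσ1 Pc 0 = bayesσ2 Pc 1) ∧
    (1 - 1 / Real.sqrt 2 ≠ Real.sqrt 2 - 1) ∧
    ¬ ∃ Pc ∈ Set.Icc (0 : ℝ) 1,
        Pc / (1 + Pc) = 1 - 1 / Real.sqrt 2 ∧ Pc / (1 + Pc) = Real.sqrt 2 - 1 := by
  refine ⟨fun Pc _ => rfl, gw_key, ?_⟩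
  rintro ⟨Pc, _, h1, h2⟩
  exact gw_key (h1 ▸ h2 ▸ rfl)
end
end

section
/- Perceived price of uncertainty in the 'Generals and the weather' game: although the underlying utilities are constant-sum (U_1(a;θ) + U_2(a;θ) = 1 for every action profile a and every weather state θ), the partially subjective expected utilities at the extended equilibrium do not sum to 1: EU*_1 + EU*_2 = (2−√2) + (1−1/√2) = 3 − (√2 + 1/√2) < 1. -/
open Finset

noncomputable section

variable {N : ℕ} {A : Fin N → Type*} [∀ j, Fintype (A j)] [∀ j, Nonempty (A j)]
  {Θ : Type*} [Fintype Θ] [Nonempty Θ]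

lemma sum_pi_fin_two (f : (∀ _ : Fin 2, Fin 2) → ℝ) :
    ∑ b, f b = f ![0,0] + f ![0,1] + f ![1,0] + f ![1,1] := by
  rw [← Equiv.sum_comp (piFinTwoEquiv fun _ => Fin 2).symm f]
  simp [Fintype.sum_prod_type, Fin.sum_univ_two, piFinTwoEquiv]
  have e : ∀ x y : Fin 2, (Fin.cons x (Fin.cons y finZeroElim) : ∀ _ : Fin 2, Fin 2) = ![x,y] := by
    intro x y; funext j; fin_cases j <;> rfl
  ring

/-- perceived price of uncertainty in the "Generals and the weather" game:
the utilities are constant-sum, yet the equilibrium expected utilities sum to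
`3 − (√2 + 1/√2) < 1`. -/
theorem gw_price_of_uncertainty :
    (∀ (a : ∀ _ : Fin 2, Fin 2) (θ : Fin 2), GWU 0 a θ + GWU 1 a θ = 1) ∧
    EUtot GWU GWσ GWπ 0 + EUtot GWU GWσ GWπ 1 = 3 - (Real.sqrt 2 + 1 / Real.sqrt 2) ∧
    3 - (Real.sqrt 2 + 1 / Real.sqrt 2) < 1 := by
  have hs : Real.sqrt 2 * Real.sqrt 2 = 2 := Real.mul_self_sqrt (by norm_num)
  have hpos : (0:ℝ) < Real.sqrt 2 := Real.sqrt_pos.mpr (by norm_num)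
  refine ⟨?_, ?_, ?_⟩
  · intro a θ
    have h0 : a 0 = 0 ∨ a 0 = 1 := by omega
    have h1 : a 1 = 0 ∨ a 1 = 1 := by omega
    rcases h0 with h0 | h0 <;> rcases h1 with h1 | h1 <;>
    fin_cases θ <;> simp [GWU, h0, h1]
  · simp only [EUtot, EUact, EUmat, piProb, Fin.sum_univ_two, sum_pi_fin_two]
    simp [GWU, GWσ, GWπ, Function.update, Matrix.cons_val_zero, Matrix.cons_val_one]
    have hne : Real.sqrt 2 ≠ 0 := ne_of_gt hpos
    have hinv : (Real.sqrt 2)⁻¹ = Real.sqrt 2 / 2 := by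
      rw [eq_div_iff (by norm_num : (2:ℝ) ≠ 0), inv_mul_eq_div, div_eq_iff hne, hs]
    rw [hinv]
    generalize Real.sqrt 2 = s at hs ⊢
    linear_combination (1 - s / 4) * hs
  · have hinv : 1 / Real.sqrt 2 = Real.sqrt 2 / 2 := by
      rw [eq_div_iff (by norm_num : (2:ℝ) ≠ 0), one_div, inv_mul_eq_div, div_eq_iff (ne_of_gt hpos), hs]
    rw [hinv]
    nlinarith [hs, Real.sqrt_lt_sqrt (by norm_num : (0:ℝ) ≤ 2) (by norm_num : (2:ℝ) < 4)]
end
end
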